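/- Let A, B be positive semidefinite with supp A ≤ supp B, and Φ a trace non-increasing positive linear map. Then Tr(Φ(A)²·Φ(B)⁻¹) ≤ Tr(A²·B⁻¹), where inverses are generalized inverses. -/

import Mathlib

open Matrix ComplexOrder

/-- `X` is the Moore–Penrose (generalized) inverse of `M`. -/
def IsMoorePenroseInverse {k : ℕ} (M X : Matrix (Fin k) (Fin k) ℂ) : Prop :=
  M * X * M = M ∧ X * M * X = X ∧ (M * X)ᴴ = M * X ∧ (X * M)ᴴ = X * M

theorem mp_unique {n : ℕ} {M X Y : Matrix (Fin n) (Fin n) ℂ}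
    (hX : IsMoorePenroseInverse M X) (hY : IsMoorePenroseInverse M Y) : X = Y := by
  obtain ⟨x1, x2, x3, x4⟩ := hX
  obtain ⟨y1, y2, y3, y4⟩ := hY
  have hMX : M * X = M * Y := by
    calc M * X = (M * X)ᴴ := x3.symm
    _ = Xᴴ * Mᴴ := by rw [conjTranspose_mul]
    _ = Xᴴ * (M * Y * M)ᴴ := by rw [y1]
    _ = Xᴴ * (Mᴴ * (M * Y)ᴴ) := by rw [conjTranspose_mul]
    _ = (Xᴴ * Mᴴ) * (M * Y) := by rw [y3, mul_assoc]
    _ = (M * X)ᴴ * (M * Y) := by rw [conjTranspose_mul]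
    _ = (M * X) * (M * Y) := by rw [x3]
    _ = (M * X * M) * Y := (mul_assoc (M * X) M Y).symm
    _ = M * Y := by rw [x1]
  have hXM : X * M = Y * M := by
    calc X * M = (X * M)ᴴ := x4.symm
    _ = Mᴴ * Xᴴ := by rw [conjTranspose_mul]
    _ = (M * (Y * M))ᴴ * Xᴴ := by rw [← mul_assoc, y1]
    _ = ((Y * M)ᴴ * Mᴴ) * Xᴴ := by rw [conjTranspose_mul]
    _ = (Y * M) * (Mᴴ * Xᴴ) := by rw [y4, mul_assoc]
    _ = (Y * M) * (X * M)ᴴ := by rw [conjTranspose_mul]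
    _ = (Y * M) * (X * M) := by rw [x4]
    _ = Y * (M * X * M) := by rw [mul_assoc, ← mul_assoc M X M]
    _ = Y * M := by rw [x1]
  calc X = X * M * X := x2.symm
  _ = X * (M * Y) := by rw [mul_assoc, hMX]
  _ = (X * M) * Y := by rw [mul_assoc]
  _ = (Y * M) * Y := by rw [hXM]
  _ = Y := y2

theorem mp_herm {n : ℕ} {M X : Matrix (Fin n) (Fin n) ℂ} (hM : M.IsHermitian)
    (h : IsMoorePenroseInverse M X) : X.IsHermitian := by
  obtain ⟨h1, h2, h3, h4⟩ := h
  have hX : IsMoorePenroseInverse M Xᴴ := by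
    refine ⟨?_, ?_, ?_, ?_⟩
    · calc M * Xᴴ * M = (Mᴴ * X * Mᴴ)ᴴ := by
            simp only [conjTranspose_mul, conjTranspose_conjTranspose, mul_assoc]
      _ = (M * X * M)ᴴ := by rw [hM.eq]
      _ = M := by rw [h1, hM.eq]
    · calc Xᴴ * M * Xᴴ = (Xᴴ * Mᴴ) * Xᴴ := by rw [hM.eq]
      _ = (X * Mᴴᴴ * X)ᴴ := by simp only [conjTranspose_mul, conjTranspose_conjTranspose, mul_assoc]
      _ = Xᴴ := by rw [conjTranspose_conjTranspose, h2]
    · calc (M * Xᴴ)ᴴ = X * Mᴴ := by rw [conjTranspose_mul, conjTranspose_conjTranspose]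
      _ = X * M := by rw [hM.eq]
      _ = (X * M)ᴴ := h4.symm
      _ = Mᴴ * Xᴴ := by rw [conjTranspose_mul]
      _ = M * Xᴴ := by rw [hM.eq]
    · calc (Xᴴ * M)ᴴ = Mᴴ * X := by rw [conjTranspose_mul, conjTranspose_conjTranspose]
      _ = M * X := by rw [hM.eq]
      _ = (M * X)ᴴ := h3.symm
      _ = Xᴴ * Mᴴ := by rw [conjTranspose_mul]
      _ = Xᴴ * M := by rw [hM.eq]
  exact mp_unique hX ⟨h1, h2, h3, h4⟩

theorem psd_trace_nonneg {n : ℕ} {M : Matrix (Fin n) (Fin n) ℂ} (hM : M.PosSemidef) :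
    0 ≤ M.trace := by
  rw [Matrix.trace]
  apply Finset.sum_nonneg
  intro i _
  have := hM.dotProduct_mulVec_nonneg (Pi.single i 1)
  simpa [dotProduct, Matrix.mulVec, Pi.single_apply, mul_ite, ite_mul,
    Finset.sum_ite_eq, Finset.sum_ite_eq'] using this

noncomputable section
namespace RenyiAux

variable {n : ℕ} {U : Matrix (Fin n) (Fin n) ℂ}

abbrev c : ℝ → ℂ := (RCLike.ofReal : ℝ → ℂ)

lemma star_comp_ofReal (f : Fin n → ℝ) : star (c ∘ f : Fin n → ℂ) = c ∘ f := by
  funext i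
  simp [RCLike.star_def, RCLike.conj_ofReal]

lemma diag_mul_diag (f g : Fin n → ℝ) :
    diagonal (c ∘ f) * diagonal (c ∘ g) = diagonal (c ∘ (f * g)) := by
  rw [diagonal_mul_diagonal]
  ext a b
  rcases eq_or_ne a b with h | h <;> simp [diagonal_apply, h]

lemma udu_mul (hU : Uᴴ * U = 1) (f g : Fin n → ℝ) :
    (U * diagonal (c ∘ f) * Uᴴ) * (U * diagonal (c ∘ g) * Uᴴ)
      = U * diagonal (c ∘ (f * g)) * Uᴴ := by
  rw [← diag_mul_diag]
  simp only [mul_assoc]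
  rw [← mul_assoc Uᴴ U, hU, one_mul, ← mul_assoc (diagonal (c ∘ f))]

lemma udu_herm (f : Fin n → ℝ) : (U * diagonal (c ∘ f) * Uᴴ).IsHermitian := by
  have : (U * diagonal (c ∘ f) * Uᴴ)ᴴ = U * diagonal (c ∘ f) * Uᴴ := by
    simp only [conjTranspose_mul, conjTranspose_conjTranspose, diagonal_conjTranspose,
      star_comp_ofReal, mul_assoc]
  exact this

lemma udu_psd (f : Fin n → ℝ) (hf : ∀ i, 0 ≤ f i) :
    (U * diagonal (c ∘ f) * Uᴴ).PosSemidef := by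
  refine PosSemidef.mul_mul_conjTranspose_same ?_ U
  refine posSemidef_diagonal_iff.mpr fun i => ?_
  rw [Function.comp_apply, RCLike.nonneg_iff]
  simp [hf i]

lemma psd_sum {α : Type*} [Fintype α] {N : ℕ} (f : Fin N → Matrix α α ℂ)
    (h : ∀ i, (f i).PosSemidef) : (∑ i, f i).PosSemidef :=
  Finset.sum_induction f _ (fun _ _ ha hb => ha.add hb) .zero (fun i _ => h i)

lemma fromBlocks_sum {N : ℕ} (X Y Z W : Fin N → Matrix (Fin n) (Fin n) ℂ) :
    fromBlocks (∑ i, X i) (∑ i, Y i) (∑ i, Z i) (∑ i, W i)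
      = ∑ i, fromBlocks (X i) (Y i) (Z i) (W i) := by
  ext i j
  rcases i with i | i <;> rcases j with j | j <;>
    simp [Matrix.sum_apply]

lemma diagonal_eq_sum (f : Fin n → ℂ) :
    diagonal f = ∑ i, f i • diagonal (Pi.single i 1) := by
  ext a b
  by_cases h : a = b
  · subst h
    simp [Matrix.sum_apply, diagonal_apply, Pi.single_apply]
  · simp [Matrix.sum_apply, diagonal_apply, h]

end RenyiAux

open RenyiAux in
/-- **Monotonicity of the Rényi 2-relative entropy.** If `A, B ≥ 0` with
`supp A ≤ supp B` and `Φ` is a trace non-increasing positive linear map, then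
`Tr (Φ(A)² Φ(B)⁻¹) ≤ Tr (A² B⁻¹)`, where the inverses are generalized
(Moore–Penrose) inverses. -/
theorem renyi_two_monotonicity {m k : ℕ}
    (Φ : Matrix (Fin m) (Fin m) ℂ →ₗ[ℂ] Matrix (Fin k) (Fin k) ℂ)
    (hΦ : ∀ X : Matrix (Fin m) (Fin m) ℂ, X.PosSemidef → (Φ X).PosSemidef)
    (hΦtr : ∀ X : Matrix (Fin m) (Fin m) ℂ, X.PosSemidef → (Φ X).trace ≤ X.trace)
    (A B : Matrix (Fin m) (Fin m) ℂ) (hA : A.PosSemidef) (hB : B.PosSemidef)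
    (hsupp : LinearMap.range A.mulVecLin ≤ LinearMap.range B.mulVecLin)
    (Binv : Matrix (Fin m) (Fin m) ℂ) (hBinv : IsMoorePenroseInverse B Binv)
    (Cinv : Matrix (Fin k) (Fin k) ℂ) (hCinv : IsMoorePenroseInverse (Φ B) Cinv) :
    (Φ A * Φ A * Cinv).trace ≤ (A * A * Binv).trace := by

  classical
  obtain ⟨hBH, -⟩ := id hB
  set U : Matrix (Fin m) (Fin m) ℂ := (hBH.eigenvectorUnitary : Matrix (Fin m) (Fin m) ℂ) with hUdef
  have hU1 : U * Uᴴ = 1 := by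
    simpa [star_eq_conjTranspose] using (mem_unitaryGroup_iff).mp hBH.eigenvectorUnitary.2
  have hU2 : Uᴴ * U = 1 := by
    simpa [star_eq_conjTranspose] using (mem_unitaryGroup_iff').mp hBH.eigenvectorUnitary.2
  set μ : Fin m → ℝ := hBH.eigenvalues with hμdef
  have hμ : ∀ i, 0 ≤ μ i := fun i => hB.eigenvalues_nonneg i
  have hspec : B = U * diagonal (c ∘ μ) * Uᴴ := by
    simpa [star_eq_conjTranspose] using hBH.spectral_theorem
  set g : Fin m → ℝ := fun i => Real.sqrt (μ i) with hgdef
  set hi : Fin m → ℝ := fun i => if μ i = 0 then 0 else (Real.sqrt (μ i))⁻¹ with hhdef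
  set p : Fin m → ℝ := fun i => if μ i = 0 then 0 else 1 with hpdef
  -- function identities
  have hgg : g * g = μ := by
    funext i; simp only [Pi.mul_apply, hgdef]; exact Real.mul_self_sqrt (hμ i)
  have hsqrt_ne : ∀ i, μ i ≠ 0 → Real.sqrt (μ i) ≠ 0 := fun i h =>
    Real.sqrt_ne_zero'.mpr (lt_of_le_of_ne (hμ i) (Ne.symm h))
  have hgh : g * hi = p := by
    funext i
    simp only [Pi.mul_apply, hgdef, hhdef, hpdef]
    by_cases h : μ i = 0
    · simp [h]
    · simp [h, mul_inv_cancel₀ (hsqrt_ne i h)]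
  have hhg : hi * g = p := by
    funext i
    simp only [Pi.mul_apply, hgdef, hhdef, hpdef]
    by_cases h : μ i = 0
    · simp [h]
    · simp [h, inv_mul_cancel₀ (hsqrt_ne i h)]
  have hpμ : p * μ = μ := by
    funext i
    simp only [Pi.mul_apply, hpdef]
    by_cases h : μ i = 0 <;> simp [h]
  have hμh2 : μ * (hi * hi) = p := by
    funext i
    simp only [Pi.mul_apply, hhdef, hpdef]
    by_cases h : μ i = 0
    · simp [h]
    · rw [if_neg h, if_neg h]
      rw [← mul_inv, Real.mul_self_sqrt (hμ i), mul_inv_cancel₀ h]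
  have hh2μ : hi * hi * μ = p := by
    rw [mul_comm, hμh2]
  have hph2 : p * (hi * hi) = hi * hi := by
    funext i
    simp only [Pi.mul_apply, hpdef, hhdef]
    by_cases h : μ i = 0 <;> simp [h]
  set S : Matrix (Fin m) (Fin m) ℂ := U * diagonal (c ∘ g) * Uᴴ with hSdef
  set S' : Matrix (Fin m) (Fin m) ℂ := U * diagonal (c ∘ hi) * Uᴴ with hS'def
  set P : Matrix (Fin m) (Fin m) ℂ := U * diagonal (c ∘ p) * Uᴴ with hPdef
  set Bp : Matrix (Fin m) (Fin m) ℂ := U * diagonal (c ∘ (hi * hi)) * Uᴴ with hBpdef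
  have hSS : S * S = B := by rw [hSdef, udu_mul hU2, hgg, hspec]
  have hSS' : S * S' = P := by rw [hSdef, hS'def, udu_mul hU2, hgh]
  have hS'S : S' * S = P := by rw [hSdef, hS'def, udu_mul hU2, hhg]
  have hS'S' : S' * S' = Bp := by rw [hS'def, udu_mul hU2]
  -- Bp is the Moore-Penrose inverse of B
  have hBBp : B * Bp = P := by
    rw [hspec, hBpdef, udu_mul hU2, hμh2]
  have hBpB : Bp * B = P := by
    rw [hspec, hBpdef, udu_mul hU2, hh2μ]
  have hPB : P * B = B := by
    rw [hspec, hPdef, udu_mul hU2, hpμ]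
  have hPBp : P * Bp = Bp := by
    rw [hPdef, hBpdef, udu_mul hU2, hph2]
  have hBpmp : IsMoorePenroseInverse B Bp := by
    refine ⟨?_, ?_, ?_, ?_⟩
    · rw [hBBp, hPB]
    · rw [hBpB, hPBp]
    · rw [hBBp]; exact (udu_herm p).eq
    · rw [hBpB]; exact (udu_herm p).eq
  have hBinvBp : Binv = Bp := mp_unique hBinv hBpmp
  subst hBinvBp
  -- A = B * Y
  have hchoose : ∀ j, ∃ v, B *ᵥ v = A *ᵥ (Pi.single j 1) := by
    intro j
    obtain ⟨v, hv⟩ := hsupp (LinearMap.mem_range_self A.mulVecLin (Pi.single j 1))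
    exact ⟨v, by simpa [mulVecLin_apply] using hv⟩
  choose y hy using hchoose
  set Y : Matrix (Fin m) (Fin m) ℂ := Matrix.of (fun i j => y j i) with hYdef
  have hBY : B * Y = A := by
    ext i j
    have h := congrFun (hy j) i
    simpa [Matrix.mul_apply, Matrix.mulVec, dotProduct, hYdef, Pi.single_apply, mul_ite,
      Finset.sum_ite_eq, Finset.sum_ite_eq'] using h
  have hPH : Pᴴ = P := by rw [hPdef]; exact (udu_herm p).eq
  have hSH : Sᴴ = S := by rw [hSdef]; exact (udu_herm g).eq
  have hS'H : S'ᴴ = S' := by rw [hS'def]; exact (udu_herm hi).eq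
  have hPA : P * A = A := by rw [← hBY, ← mul_assoc, hPB]
  have hAP : A * P = A := by
    have h := congrArg conjTranspose hPA
    rwa [conjTranspose_mul, hPH, hA.1.eq] at h
  set T : Matrix (Fin m) (Fin m) ℂ := S' * A * S' with hTdef
  have hTH : T.IsHermitian := by
    rw [hTdef]
    nth_rewrite 2 [← hS'H]
    exact isHermitian_mul_mul_conjTranspose S' hA.1
  have hSTS : S * T * S = A := by
    rw [hTdef]
    simp only [← mul_assoc]
    rw [hSS', mul_assoc (P * A) S' S, hS'S, hPA, hAP]
  have hSTTS : S * (T * T) * S = A * Bp * A := by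
    rw [hTdef]
    simp only [← mul_assoc]
    rw [hSS', mul_assoc (P * A) S' S', hS'S', mul_assoc (P * A * Bp * A) S' S, hS'S,
      hPA, mul_assoc (A * Bp) A P, hAP]
  -- spectral decomposition of T
  set V : Matrix (Fin m) (Fin m) ℂ := (hTH.eigenvectorUnitary : Matrix (Fin m) (Fin m) ℂ)
    with hVdef
  have hV1 : V * Vᴴ = 1 := by
    simpa [star_eq_conjTranspose] using (mem_unitaryGroup_iff).mp hTH.eigenvectorUnitary.2
  have hV2 : Vᴴ * V = 1 := by
    simpa [star_eq_conjTranspose] using (mem_unitaryGroup_iff').mp hTH.eigenvectorUnitary.2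
  set t : Fin m → ℝ := hTH.eigenvalues with htdef
  have htspec : T = V * diagonal (c ∘ t) * Vᴴ := by
    simpa [star_eq_conjTranspose] using hTH.spectral_theorem
  set E : Fin m → Matrix (Fin m) (Fin m) ℂ := fun i => diagonal (Pi.single i 1) with hEdef
  set N : Fin m → Matrix (Fin m) (Fin m) ℂ := fun i => S * (V * E i * Vᴴ) * S with hNdef
  have hEsum : ∑ i, E i = 1 := by
    ext a b
    rcases eq_or_ne a b with rfl | hab
    · simp [hEdef, Matrix.sum_apply, diagonal_apply, Pi.single_apply, Matrix.one_apply]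
    · simp [hEdef, Matrix.sum_apply, diagonal_apply, Pi.single_apply, Matrix.one_apply, hab]
  have hNsum : B = ∑ i, N i := by
    have h1 : S * (V * (∑ i, E i) * Vᴴ) * S = ∑ i, N i := by
      simp only [hNdef, Finset.mul_sum, Finset.sum_mul]
    rw [← h1, hEsum, mul_one, hV1, mul_one, hSS]
  have hdiagsum : diagonal (c ∘ t) = ∑ i, (c (t i)) • E i := by
    simpa [hEdef] using diagonal_eq_sum (c ∘ t)
  have hdiag2sum : diagonal (c ∘ t) * diagonal (c ∘ t)
      = ∑ i, ((c (t i)) * (c (t i))) • E i := by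
    rw [diagonal_mul_diagonal]
    simpa [hEdef] using diagonal_eq_sum (fun i => (c ∘ t) i * (c ∘ t) i)
  have hTsum : T = ∑ i, (c (t i)) • (V * E i * Vᴴ) := by
    rw [htspec, hdiagsum]
    simp only [Finset.mul_sum, Finset.sum_mul, Matrix.mul_smul, Matrix.smul_mul]
  have hTT : T * T = V * (diagonal (c ∘ t) * diagonal (c ∘ t)) * Vᴴ := by
    rw [htspec]
    simp only [mul_assoc]
    rw [← mul_assoc Vᴴ V, hV2, one_mul]
  have hAsum : A = ∑ i, (c (t i)) • N i := by
    have h1 : S * (∑ i, (c (t i)) • (V * E i * Vᴴ)) * S = ∑ i, (c (t i)) • N i := by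
      simp only [hNdef, Finset.mul_sum, Finset.sum_mul, Matrix.mul_smul, Matrix.smul_mul]
    rw [← hSTS, hTsum, h1]
  have hCsum : A * Bp * A = ∑ i, ((c (t i)) * (c (t i))) • N i := by
    have h1 : S * (∑ i, ((c (t i)) * (c (t i))) • (V * E i * Vᴴ)) * S
        = ∑ i, ((c (t i)) * (c (t i))) • N i := by
      simp only [hNdef, Finset.mul_sum, Finset.sum_mul, Matrix.mul_smul, Matrix.smul_mul]
    have h2 : V * (∑ i, ((c (t i)) * (c (t i))) • E i) * Vᴴ
        = ∑ i, ((c (t i)) * (c (t i))) • (V * E i * Vᴴ) := by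
      simp only [Finset.mul_sum, Finset.sum_mul, Matrix.mul_smul, Matrix.smul_mul]
    rw [← hSTTS, hTT, hdiag2sum, h2, h1]
  -- Positive semidefiniteness of the building blocks
  have hNpsd : ∀ i, (N i).PosSemidef := by
    intro i
    have hE : (E i).PosSemidef := by
      refine posSemidef_diagonal_iff.mpr fun j => ?_
      rw [Pi.single_apply]
      split <;> simp
    have hQ : (V * E i * Vᴴ).PosSemidef := hE.mul_mul_conjTranspose_same V
    have h := hQ.mul_mul_conjTranspose_same S
    rw [hSH] at h
    exact h
  have hRpsd : ∀ i, (Φ (N i)).PosSemidef := fun i => hΦ _ (hNpsd i)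
  -- the key block matrix
  set M' : Matrix (Fin k ⊕ Fin k) (Fin k ⊕ Fin k) ℂ :=
    fromBlocks (Φ (A * Bp * A)) (Φ A) (Φ A) (Φ B) with hM'def
  have hM'psd : M'.PosSemidef := by
    have hsum : M' = ∑ i, fromBlocks ((c (t i) * c (t i)) • Φ (N i)) (c (t i) • Φ (N i))
        (c (t i) • Φ (N i)) (Φ (N i)) := by
      have h11 : Φ (A * Bp * A) = ∑ i, (c (t i) * c (t i)) • Φ (N i) := by
        rw [hCsum, map_sum]
        exact Finset.sum_congr rfl fun i _ => map_smul Φ _ _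
      have h12 : Φ A = ∑ i, (c (t i)) • Φ (N i) := by
        rw [hAsum, map_sum]
        exact Finset.sum_congr rfl fun i _ => map_smul Φ _ _
      have h22 : Φ B = ∑ i, Φ (N i) := by rw [hNsum, map_sum]
      rw [hM'def, h11, h12, h22, ← fromBlocks_sum]
    rw [hsum]
    apply psd_sum
    intro i
    obtain ⟨r, hr⟩ : ∃ r : Matrix (Fin k) (Fin k) ℂ, Φ (N i) = rᴴ * r := by
      have hRH := (hRpsd i).1
      have hsp : Φ (N i) = (hRH.eigenvectorUnitary : Matrix (Fin k) (Fin k) ℂ) *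
          diagonal (c ∘ hRH.eigenvalues) * (hRH.eigenvectorUnitary : Matrix (Fin k) (Fin k) ℂ)ᴴ := by
        simpa [star_eq_conjTranspose] using hRH.spectral_theorem
      have hgg' : (fun j => Real.sqrt (hRH.eigenvalues j)) * (fun j => Real.sqrt (hRH.eigenvalues j))
          = hRH.eigenvalues := by
        funext j; exact Real.mul_self_sqrt ((hRpsd i).eigenvalues_nonneg j)
      refine ⟨diagonal (c ∘ fun j => Real.sqrt (hRH.eigenvalues j)) *
        (hRH.eigenvectorUnitary : Matrix (Fin k) (Fin k) ℂ)ᴴ, ?_⟩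
      refine hsp.trans ?_
      rw [conjTranspose_mul, conjTranspose_conjTranspose, diagonal_conjTranspose,
        star_comp_ofReal]
      simp only [mul_assoc]
      rw [← mul_assoc (diagonal _) (diagonal _), diag_mul_diag, hgg']
    have hG : (fromBlocks ((c (t i)) • r) r 0 0)ᴴ * (fromBlocks ((c (t i)) • r) r 0 0)
        = fromBlocks ((c (t i) * c (t i)) • Φ (N i)) (c (t i) • Φ (N i))
            (c (t i) • Φ (N i)) (Φ (N i)) := by
      rw [fromBlocks_conjTranspose, fromBlocks_multiply]
      simp only [conjTranspose_smul, conjTranspose_zero, RCLike.star_def, RCLike.conj_ofReal,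
        Matrix.smul_mul, Matrix.mul_smul, smul_smul, Matrix.mul_zero, Matrix.zero_mul,
        add_zero, zero_add, ← hr]
    rw [← hG]
    exact posSemidef_conjTranspose_mul_self _
  -- Schur complement congruence
  set W : Matrix (Fin k) (Fin k) ℂ := Φ A * Cinv with hWdef
  have hΦBH : (Φ B).IsHermitian := (hΦ B hB).1
  have hCinvH : Cinvᴴ = Cinv := (mp_herm hΦBH hCinv).eq
  have hΦAH : (Φ A)ᴴ = Φ A := (hΦ A hA).1.eq
  have hWH : Wᴴ = Cinv * Φ A := by rw [hWdef, conjTranspose_mul, hCinvH, hΦAH]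
  have f1 : W * Φ A = Φ A * Cinv * Φ A := by rw [hWdef]
  have f2 : Φ A * Wᴴ = Φ A * Cinv * Φ A := by rw [hWH, ← mul_assoc]
  have f3 : W * Φ B * Wᴴ = Φ A * Cinv * Φ A := by
    rw [hWdef, hWH]
    simp only [mul_assoc]
    rw [← mul_assoc (Φ B) Cinv (Φ A), ← mul_assoc Cinv (Φ B * Cinv) (Φ A),
      ← mul_assoc Cinv (Φ B) Cinv, hCinv.2.1]
  set L : Matrix (Fin k ⊕ Fin k) (Fin k ⊕ Fin k) ℂ := fromBlocks 1 (-W) 0 0 with hLdef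
  have hkey : L * M' * Lᴴ = fromBlocks (Φ (A * Bp * A) - Φ A * Cinv * Φ A) 0 0 0 := by
    rw [hLdef, hM'def, fromBlocks_conjTranspose, fromBlocks_multiply, fromBlocks_multiply]
    simp only [Matrix.one_mul, Matrix.mul_one, Matrix.zero_mul, Matrix.mul_zero, add_zero,
      zero_add, conjTranspose_zero, conjTranspose_one, Matrix.neg_mul, Matrix.mul_neg,
      conjTranspose_neg, Matrix.add_mul, Matrix.mul_add]
    rw [f1, f2, f3]
    abel_nf
  have hDpsd : (Φ (A * Bp * A) - Φ A * Cinv * Φ A).PosSemidef := by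
    have h1 := hM'psd.mul_mul_conjTranspose_same L
    rw [hkey] at h1
    have h2 := h1.submatrix Sum.inl
    have h3 : (fromBlocks (Φ (A * Bp * A) - Φ A * Cinv * Φ A) 0 0
        (0 : Matrix (Fin k) (Fin k) ℂ)).submatrix Sum.inl Sum.inl
        = Φ (A * Bp * A) - Φ A * Cinv * Φ A := rfl
    rwa [h3] at h2
  have hBppsd : Bp.PosSemidef := by
    rw [hBpdef]
    exact udu_psd _ (fun i => mul_self_nonneg (hi i))
  have hCpsd : (A * Bp * A).PosSemidef := by
    have h := hBppsd.conjTranspose_mul_mul_same A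
    rwa [hA.1.eq] at h
  -- assemble the trace inequalities
  have htr1 : (Φ A * Φ A * Cinv).trace = (Φ A * Cinv * Φ A).trace :=
    (trace_mul_cycle (Φ A) Cinv (Φ A)).symm
  have htr2 : (Φ A * Cinv * Φ A).trace ≤ (Φ (A * Bp * A)).trace := by
    have h0 := psd_trace_nonneg hDpsd
    rw [trace_sub, sub_nonneg] at h0
    exact h0
  have htr3 : (Φ (A * Bp * A)).trace ≤ (A * Bp * A).trace := hΦtr _ hCpsd
  have htr4 : (A * Bp * A).trace = (A * A * Bp).trace := trace_mul_cycle A Bp A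
  rw [htr1, ← htr4]
  exact le_trans htr2 htr3
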